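/- arXiv:2106.07336 — 2 statements merged into one kernel-verified Lean document; each statement's English description precedes it below -/
import Mathlib

section
/- Let G be a finite bipartite graph with left vertex set U of size m ≥ 1 and right vertex set V of size n ≥ 1, with no isolated vertices, and let k be an even positive integer. Let P and Q be the probability mass functions on U and V given by P(u) = d(u)/|E(G)| and Q(v) = d(v)/|E(G)|. Then the number |𝒫_k| of walks of length k in G (where edges may be repeated) satisfies |𝒫_k| ≥ |E(G)|^k · exp( -((k/2) - 1) · (H(P) + H(Q)) ) · exp( -min{H(P), H(Q)} ), where the entropies are in nats. -/
/-- The bipartite graph on `U ⊕ V` determined by the relation `R : U → V → Prop`: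
a left vertex `u` is adjacent to a right vertex `v` iff `R u v`, and there are no
edges within `U` or within `V`. -/
def bipGraph {U V : Type*} (R : U → V → Prop) : SimpleGraph (U ⊕ V) where
  Adj x y :=
    Sum.elim (fun u => Sum.elim (fun _ => False) (fun v => R u v))
      (fun v => Sum.elim (fun u => R u v) (fun _ => False)) x y
  symm := ⟨by rintro (u | v) (u' | v') h <;> simp_all⟩
  loopless := ⟨by rintro (u | v) h <;> exact h⟩

/-- The degree of the left vertex `u`. -/
def degL {U V : Type*} [Fintype V] (R : U → V → Prop) [∀ u v, Decidable (R u v)] (u : U) : ℕ :=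
  (Finset.univ.filter fun v => R u v).card

/-- The degree of the right vertex `v`. -/
def degR {U V : Type*} [Fintype U] (R : U → V → Prop) [∀ u v, Decidable (R u v)] (v : V) : ℕ :=
  (Finset.univ.filter fun u => R u v).card

/-- The number of edges of the bipartite graph. -/
def edgeCount {U V : Type*} [Fintype U] [Fintype V] (R : U → V → Prop)
    [∀ u v, Decidable (R u v)] : ℕ :=
  (Finset.univ.filter fun p : U × V => R p.1 p.2).card

/-- The number of walks of length `k` in the bipartite graph (sequences of `k + 1`
vertices, each adjacent to the next; vertices and edges may be repeated). -/
noncomputable def walkCount {U V : Type*} [Fintype U] [Fintype V]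
    (R : U → V → Prop) (k : ℕ) : ℕ :=
  ∑ x : U ⊕ V, ∑ y : U ⊕ V, Nat.card {w : (bipGraph R).Walk x y // w.length = k}

/-- The Shannon entropy (in nats) of a probability mass function `p` on a finite set,
with the convention `0 · log 0 = 0` (automatic in Lean since `Real.log 0 = 0`). -/
noncomputable def entPMF {α : Type*} [Fintype α] (p : α → ℝ) : ℝ :=
  -∑ a, p a * Real.log (p a)

section Aux
open Finset
variable {U V : Type*} [Fintype U] [Fintype V]

def swapRel (R : U → V → Prop) : V → U → Prop := fun v u => R u v

instance swapDec (R : U → V → Prop) [∀ u v, Decidable (R u v)] :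
    ∀ v u, Decidable (swapRel R v u) := fun v u => inferInstanceAs (Decidable (R u v))

instance bipAdjDec (R : U → V → Prop) [∀ u v, Decidable (R u v)] :
    DecidableRel (bipGraph R).Adj
  | Sum.inl _, Sum.inl _ => .isFalse id
  | Sum.inl u, Sum.inr v => inferInstanceAs (Decidable (R u v))
  | Sum.inr v, Sum.inl u => inferInstanceAs (Decidable (R u v))
  | Sum.inr _, Sum.inr _ => .isFalse id

def fwalk (R : U → V → Prop) [∀ u v, Decidable (R u v)] : ℕ → U ⊕ V → ℕ
  | 0, _ => 1
  | n+1, Sum.inl u => ∑ v ∈ univ.filter (fun v => R u v), fwalk R n (Sum.inr v)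
  | n+1, Sum.inr v => ∑ u ∈ univ.filter (fun u => R u v), fwalk R n (Sum.inl u)

variable (R : U → V → Prop) [∀ u v, Decidable (R u v)]

lemma fwalk_swap : ∀ n : ℕ,
    (∀ v, fwalk (swapRel R) n (Sum.inl v) = fwalk R n (Sum.inr v)) ∧
    (∀ u, fwalk (swapRel R) n (Sum.inr u) = fwalk R n (Sum.inl u)) := by
  intro n
  induction n with
  | zero => exact ⟨fun _ => rfl, fun _ => rfl⟩
  | succ n ih =>
    refine ⟨fun v => ?_, fun u => ?_⟩
    · simp only [fwalk, swapRel, ih.2]; rfl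
    · simp only [fwalk, swapRel, ih.1]; rfl

lemma degL_swap (v : V) : degL (swapRel R) v = degR R v := rfl

lemma edgeCount_eq_sum_degL : edgeCount R = ∑ u, degL R u := by
  unfold edgeCount degL
  simp only [Finset.card_filter]
  exact Fintype.sum_prod_type _

lemma edgeCount_eq_sum_degR : edgeCount R = ∑ v, degR R v := by
  unfold edgeCount degR
  simp only [Finset.card_filter]
  exact Fintype.sum_prod_type_right _

lemma edgeCount_swap : edgeCount (swapRel R) = edgeCount R := by
  rw [edgeCount_eq_sum_degL, edgeCount_eq_sum_degR R]
  rfl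

variable {R}

lemma one_le_degL (hL : ∀ u, ∃ v, R u v) (u : U) : 1 ≤ degL R u := by
  obtain ⟨v, hv⟩ := hL u
  exact Finset.card_pos.mpr ⟨v, by simp [hv]⟩

lemma one_le_edgeCount (hL : ∀ u, ∃ v, R u v) (hU : 0 < Fintype.card U) :
    1 ≤ edgeCount R := by
  obtain ⟨u⟩ := Fintype.card_pos_iff.mp hU
  calc 1 ≤ degL R u := one_le_degL hL u
    _ ≤ ∑ u, degL R u := Finset.single_le_sum (fun _ _ => Nat.zero_le _) (mem_univ u)
    _ = edgeCount R := (edgeCount_eq_sum_degL R).symm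

lemma one_le_fwalk (hL : ∀ u, ∃ v, R u v) (hR : ∀ v, ∃ u, R u v) :
    ∀ n x, 1 ≤ fwalk R n x := by
  intro n
  induction n with
  | zero => intro x; exact le_refl 1
  | succ n ih =>
    rintro (u | v)
    · obtain ⟨v, hv⟩ := hL u
      calc 1 ≤ fwalk R n (Sum.inr v) := ih _
        _ ≤ _ := Finset.single_le_sum (f := fun v => fwalk R n (Sum.inr v))
            (fun _ _ => Nat.zero_le _) (by simp [hv])
    · obtain ⟨u, hu⟩ := hR v
      calc 1 ≤ fwalk R n (Sum.inl u) := ih _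
        _ ≤ _ := Finset.single_le_sum (f := fun u => fwalk R n (Sum.inl u))
            (fun _ _ => Nat.zero_le _) (by simp [hu])

variable (R)

lemma walkCount_eq_sum_fwalk (k : ℕ) : walkCount R k = ∑ x, fwalk R k x := by
  classical
  have key : ∀ n (x : U ⊕ V), ∑ y, ((bipGraph R).adjMatrix ℕ ^ n) x y = fwalk R n x := by
    intro n
    induction n with
    | zero => intro x; simp [fwalk, Matrix.one_apply]
    | succ n ih =>
      intro x
      rw [pow_succ']
      simp only [Matrix.mul_apply]
      rw [Finset.sum_comm]
      have h1 : ∀ z, ∑ y, (bipGraph R).adjMatrix ℕ x z * ((bipGraph R).adjMatrix ℕ ^ n) z y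
          = (bipGraph R).adjMatrix ℕ x z * fwalk R n z := by
        intro z; rw [← Finset.mul_sum, ih z]
      simp only [h1, SimpleGraph.adjMatrix_apply]
      rcases x with u | v
      · rw [Fintype.sum_sum_type]
        have hA1 : ∀ u' : U, ¬ (bipGraph R).Adj (Sum.inl u) (Sum.inl u') := fun _ h => h
        have hA2 : ∀ v : V, (bipGraph R).Adj (Sum.inl u) (Sum.inr v) ↔ R u v := fun _ => Iff.rfl
        simp only [fwalk]
        rw [Finset.sum_filter]
        simp only [hA1, hA2, ite_mul, if_false, zero_mul, one_mul, Finset.sum_const_zero, zero_add]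
        refine Finset.sum_congr rfl fun v _ => ?_
        split
        · rw [← ih (Sum.inr v), Fintype.sum_sum_type]
        · simp
      · rw [Fintype.sum_sum_type]
        have hA1 : ∀ v' : V, ¬ (bipGraph R).Adj (Sum.inr v) (Sum.inr v') := fun _ h => h
        have hA2 : ∀ u : U, (bipGraph R).Adj (Sum.inr v) (Sum.inl u) ↔ R u v := fun _ => Iff.rfl
        simp only [fwalk]
        rw [Finset.sum_filter]
        simp only [hA1, hA2, ite_mul, if_false, zero_mul, one_mul, Finset.sum_const_zero, add_zero]
        refine Finset.sum_congr rfl fun u _ => ?_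
        split
        · rw [← ih (Sum.inl u), Fintype.sum_sum_type]
        · simp
  unfold walkCount
  refine Finset.sum_congr rfl fun x _ => ?_
  rw [← key k x]
  refine Finset.sum_congr rfl fun y _ => ?_
  rw [SimpleGraph.adjMatrix_pow_apply_eq_card_walk, Nat.card_eq_fintype_card]
  exact Fintype.card_congr (Equiv.refl _)

end Aux
section Analytic
open Finset Real
variable {U V : Type*} [Fintype U] [Fintype V]

lemma log_jensen {ι : Type*} (t : Finset ι) (w x : ι → ℝ) (hw : ∀ i ∈ t, 0 ≤ w i)
    (hw1 : ∑ i ∈ t, w i = 1) (hx : ∀ i ∈ t, 0 < x i) :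
    ∑ i ∈ t, w i * Real.log (x i) ≤ Real.log (∑ i ∈ t, w i * x i) := by
  have h := (strictConcaveOn_log_Ioi.concaveOn).le_map_sum (t := t) (w := w) (p := x)
    hw hw1 (fun i hi => hx i hi)
  simpa [smul_eq_mul] using h

variable (R : U → V → Prop) [∀ u v, Decidable (R u v)]

noncomputable def LL (n : ℕ) : ℝ :=
  ∑ u, ((degL R u : ℝ) / (edgeCount R : ℝ)) * Real.log (fwalk R n (Sum.inl u))

lemma degR_swap (u : U) : degR (swapRel R) u = degL R u := rfl

variable {R}

lemma edgeCount_pos (hL : ∀ u, ∃ v, R u v) (hU : 0 < Fintype.card U) :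
    (0:ℝ) < (edgeCount R : ℝ) := by
  exact_mod_cast one_le_edgeCount hL hU

lemma sum_P (hE : (0:ℝ) < (edgeCount R : ℝ)) :
    ∑ u, (degL R u : ℝ) / (edgeCount R : ℝ) = 1 := by
  rw [← Finset.sum_div, div_eq_one_iff_eq (ne_of_gt hE)]
  exact_mod_cast (edgeCount_eq_sum_degL R).symm

lemma sum_deg_log (hL : ∀ u, ∃ v, R u v) (hE : (0:ℝ) < (edgeCount R : ℝ)) :
    ∑ u, ((degL R u : ℝ) / (edgeCount R : ℝ)) * Real.log (degL R u)
      = Real.log (edgeCount R)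
        - entPMF (fun u : U => (degL R u : ℝ) / (edgeCount R : ℝ)) := by
  unfold entPMF
  have hd : ∀ u, (0:ℝ) < (degL R u : ℝ) := fun u => by exact_mod_cast one_le_degL hL u
  have hlog : ∀ u : U, Real.log ((degL R u : ℝ) / (edgeCount R : ℝ))
      = Real.log (degL R u) - Real.log (edgeCount R) :=
    fun u => Real.log_div (ne_of_gt (hd u)) (ne_of_gt hE)
  simp only [hlog, mul_sub]
  rw [Finset.sum_sub_distrib, ← Finset.sum_mul, sum_P hE]
  ring

lemma LL_step (hL : ∀ u, ∃ v, R u v) (hR : ∀ v, ∃ u, R u v)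
    (hE : (0:ℝ) < (edgeCount R : ℝ)) (n : ℕ) :
    Real.log (edgeCount R) - entPMF (fun u : U => (degL R u : ℝ) / (edgeCount R : ℝ))
      + LL (swapRel R) n ≤ LL R (n + 1) := by
  set E : ℝ := (edgeCount R : ℝ) with hEdef
  have hd : ∀ u, (0:ℝ) < (degL R u : ℝ) := fun u => by exact_mod_cast one_le_degL hL u
  have hfpos : ∀ m x, (0:ℝ) < (fwalk R m x : ℝ) := fun m x => by
    exact_mod_cast one_le_fwalk hL hR m x
  set Sv : U → ℝ := fun u => ∑ v ∈ Finset.univ.filter (fun v => R u v),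
    Real.log (fwalk R n (Sum.inr v)) with hSv
  have keyu : ∀ u : U, Real.log (degL R u) + (degL R u : ℝ)⁻¹ * Sv u
      ≤ Real.log (fwalk R (n+1) (Sum.inl u)) := by
    intro u
    have hw1 : ∑ _v ∈ Finset.univ.filter (fun v => R u v), (degL R u : ℝ)⁻¹ = 1 := by
      rw [Finset.sum_const, nsmul_eq_mul]
      rw [show (Finset.univ.filter (fun v => R u v)).card = degL R u from rfl]
      exact mul_inv_cancel₀ (ne_of_gt (hd u))
    have hJ := log_jensen (Finset.univ.filter (fun v => R u v))
      (fun _ => (degL R u : ℝ)⁻¹) (fun v => (fwalk R n (Sum.inr v) : ℝ))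
      (fun _ _ => by positivity) hw1 (fun v _ => hfpos n _)
    have hsum : ∑ v ∈ Finset.univ.filter (fun v => R u v),
        (degL R u : ℝ)⁻¹ * (fwalk R n (Sum.inr v) : ℝ)
        = (degL R u : ℝ)⁻¹ * (fwalk R (n+1) (Sum.inl u) : ℝ) := by
      rw [← Finset.mul_sum]
      congr 1
      rw [show fwalk R (n+1) (Sum.inl u)
        = ∑ v ∈ Finset.univ.filter (fun v => R u v), fwalk R n (Sum.inr v) from rfl]
      push_cast
      rfl
    rw [hsum, Real.log_mul (inv_ne_zero (ne_of_gt (hd u))) (ne_of_gt (hfpos _ _)), Real.log_inv,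
      ← Finset.mul_sum] at hJ
    linarith [hJ]
  have main : ∑ u, ((degL R u : ℝ) / E) * (Real.log (degL R u) + (degL R u : ℝ)⁻¹ * Sv u)
      ≤ LL R (n+1) := by
    refine Finset.sum_le_sum fun u _ => ?_
    exact mul_le_mul_of_nonneg_left (keyu u) (by positivity)
  have expand : ∑ u, ((degL R u : ℝ) / E) * (Real.log (degL R u) + (degL R u : ℝ)⁻¹ * Sv u)
      = ∑ u, ((degL R u : ℝ) / E) * Real.log (degL R u) + (∑ u, Sv u) / E := by
    rw [Finset.sum_div, ← Finset.sum_add_distrib]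
    refine Finset.sum_congr rfl fun u _ => ?_
    have h1 : (degL R u : ℝ) ≠ 0 := ne_of_gt (hd u)
    field_simp
  have swapsum : (∑ u, Sv u) / E = LL (swapRel R) n := by
    have h1 : ∑ u, Sv u = ∑ v, (degR R v : ℝ) * Real.log (fwalk R n (Sum.inr v)) := by
      simp only [hSv, Finset.sum_filter]
      rw [Finset.sum_comm]
      refine Finset.sum_congr rfl fun v _ => ?_
      rw [← Finset.sum_filter, Finset.sum_const, nsmul_eq_mul]
      rfl
    rw [h1]
    unfold LL
    rw [Finset.sum_div]
    refine Finset.sum_congr rfl fun v _ => ?_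
    rw [degL_swap, edgeCount_swap, (fwalk_swap R n).1 v]
    ring
  rw [expand, swapsum, sum_deg_log hL hE] at main
  linarith [main]

end Analytic
section Final
open Finset Real
variable {U V : Type*} [Fintype U] [Fintype V]
variable {R : U → V → Prop} [∀ u v, Decidable (R u v)]

lemma entPMF_swapL : entPMF (fun v : V => (degL (swapRel R) v : ℝ) / (edgeCount (swapRel R) : ℝ))
    = entPMF (fun v : V => (degR R v : ℝ) / (edgeCount R : ℝ)) := by
  simp only [degL_swap, edgeCount_swap]

lemma entPMF_swapR : entPMF (fun u : U => (degR (swapRel R) u : ℝ) / (edgeCount (swapRel R) : ℝ))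
    = entPMF (fun u : U => (degL R u : ℝ) / (edgeCount R : ℝ)) := by
  simp only [degR_swap, edgeCount_swap]

lemma LL_even (hL : ∀ u, ∃ v, R u v) (hR : ∀ v, ∃ u, R u v)
    (hU : 0 < Fintype.card U) (m : ℕ) :
    (m : ℝ) * (2 * Real.log (edgeCount R)
      - entPMF (fun u : U => (degL R u : ℝ) / (edgeCount R : ℝ))
      - entPMF (fun v : V => (degR R v : ℝ) / (edgeCount R : ℝ))) ≤ LL R (2*m) := by
  have hE := edgeCount_pos hL hU
  have hE' : (0:ℝ) < (edgeCount (swapRel R) : ℝ) := by rw [edgeCount_swap]; exact hE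
  induction m with
  | zero => simp [LL, fwalk]
  | succ m ih =>
    have s1 := LL_step hL hR hE (2*m+1)
    have s2 := LL_step (R := swapRel R) (fun v => hR v) (fun u => hL u) hE' (2*m)
    rw [show LL (swapRel (swapRel R)) = LL R from rfl] at s2
    simp only [degL_swap, edgeCount_swap] at s2
    rw [show 2*(m+1) = (2*m+1)+1 from by ring]
    push_cast
    linarith [ih, s1, s2]

lemma side_bound (hL : ∀ u, ∃ v, R u v) (hR : ∀ v, ∃ u, R u v)
    (hU : 0 < Fintype.card U) (m : ℕ) :
    (edgeCount R : ℝ) ^ (2*m)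
      * Real.exp (-(((2*m : ℕ) : ℝ) / 2 - 1) *
          (entPMF (fun u : U => (degL R u : ℝ) / (edgeCount R : ℝ))
            + entPMF (fun v : V => (degR R v : ℝ) / (edgeCount R : ℝ))))
      * Real.exp (-(entPMF (fun v : V => (degR R v : ℝ) / (edgeCount R : ℝ))))
      ≤ ∑ u, (fwalk R (2*m) (Sum.inl u) : ℝ) := by
  have hE := edgeCount_pos hL hU
  have hd : ∀ u, (0:ℝ) < (degL R u : ℝ) := fun u => by exact_mod_cast one_le_degL hL u
  set E : ℝ := (edgeCount R : ℝ)
  set HP : ℝ := entPMF (fun u : U => (degL R u : ℝ) / E) with hHP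
  set HQ : ℝ := entPMF (fun v : V => (degR R v : ℝ) / E)
  have hfpos : ∀ x, (0:ℝ) < (fwalk R (2*m) x : ℝ) := fun x => by
    exact_mod_cast one_le_fwalk hL hR (2*m) x
  have hJ := log_jensen Finset.univ (fun u => (degL R u : ℝ) / E)
    (fun u => (fwalk R (2*m) (Sum.inl u) : ℝ) / ((degL R u : ℝ) / E))
    (fun u _ => le_of_lt (div_pos (hd u) hE)) (sum_P hE)
    (fun u _ => div_pos (hfpos _) (div_pos (hd u) hE))
  have hcan : ∀ u : U, ((degL R u : ℝ) / E) *
      ((fwalk R (2*m) (Sum.inl u) : ℝ) / ((degL R u : ℝ) / E))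
      = (fwalk R (2*m) (Sum.inl u) : ℝ) := by
    intro u
    rw [mul_div_cancel₀ _ (ne_of_gt (div_pos (hd u) hE))]
  have hlog : ∀ u : U, Real.log ((fwalk R (2*m) (Sum.inl u) : ℝ) / ((degL R u : ℝ) / E))
      = Real.log (fwalk R (2*m) (Sum.inl u)) - Real.log ((degL R u : ℝ) / E) :=
    fun u => Real.log_div (ne_of_gt (hfpos _)) (ne_of_gt (div_pos (hd u) hE))
  simp only [hcan, hlog, mul_sub] at hJ
  rw [Finset.sum_sub_distrib] at hJ
  have hJ' : LL R (2*m) + HP ≤ Real.log (∑ u, (fwalk R (2*m) (Sum.inl u) : ℝ)) := by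
    have : LL R (2*m) = ∑ u, ((degL R u : ℝ) / E) * Real.log (fwalk R (2*m) (Sum.inl u)) := rfl
    rw [this, hHP]
    unfold entPMF
    linarith [hJ]
  have hSpos : (0:ℝ) < ∑ u, (fwalk R (2*m) (Sum.inl u) : ℝ) :=
    Finset.sum_pos (fun u _ => hfpos _) (Finset.univ_nonempty_iff.mpr (Fintype.card_pos_iff.mp hU))
  have hLL := LL_even hL hR hU m
  calc E ^ (2*m) * Real.exp (-(((2*m : ℕ) : ℝ) / 2 - 1) * (HP + HQ)) * Real.exp (-HQ)
      = Real.exp (((2*m : ℕ) : ℝ) * Real.log E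
          + (-(((2*m : ℕ) : ℝ) / 2 - 1) * (HP + HQ)) + (-HQ)) := by
        rw [Real.exp_add, Real.exp_add, ← Real.exp_log hE, ← Real.exp_nat_mul, Real.exp_log hE]
    _ ≤ Real.exp (LL R (2*m) + HP) := by
        apply Real.exp_le_exp.mpr
        push_cast at hLL ⊢
        linarith [hLL]
    _ ≤ Real.exp (Real.log (∑ u, (fwalk R (2*m) (Sum.inl u) : ℝ))) := Real.exp_le_exp.mpr hJ'
    _ = ∑ u, (fwalk R (2*m) (Sum.inl u) : ℝ) := Real.exp_log hSpos

end Final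

/-- Entropy-based lower bound on the number of walks of even length `k` in a finite
bipartite graph with nonempty sides and no isolated vertices:
`|𝒫_k| ≥ |E(G)|^k · exp(-(k/2 - 1) · (H(P) + H(Q))) · exp(-min{H(P), H(Q)})`,
where `P(u) = d(u)/|E(G)|` and `Q(v) = d(v)/|E(G)|`. -/
theorem walks_entropy_lower_bound_even {U V : Type*} [Fintype U] [Fintype V]
    (R : U → V → Prop) [∀ u v, Decidable (R u v)]
    (hU : 0 < Fintype.card U) (hV : 0 < Fintype.card V)
    (hisoL : ∀ u : U, ∃ v : V, R u v) (hisoR : ∀ v : V, ∃ u : U, R u v)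
    (k : ℕ) (hk0 : 0 < k) (hk : Even k) :
    (edgeCount R : ℝ) ^ k *
        Real.exp (-((k : ℝ) / 2 - 1) *
          (entPMF (fun u : U => (degL R u : ℝ) / (edgeCount R : ℝ)) +
            entPMF (fun v : V => (degR R v : ℝ) / (edgeCount R : ℝ)))) *
        Real.exp (-min (entPMF (fun u : U => (degL R u : ℝ) / (edgeCount R : ℝ)))
          (entPMF (fun v : V => (degR R v : ℝ) / (edgeCount R : ℝ))))
      ≤ (walkCount R k : ℝ) := by
  obtain ⟨m, hm⟩ := hk
  have hk2 : k = 2 * m := by omega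
  subst hk2
  set HP : ℝ := entPMF (fun u : U => (degL R u : ℝ) / (edgeCount R : ℝ)) with hHP
  set HQ : ℝ := entPMF (fun v : V => (degR R v : ℝ) / (edgeCount R : ℝ)) with hHQ
  have hfnn : ∀ x, (0:ℝ) ≤ (fwalk R (2*m) x : ℝ) := fun x => by positivity
  have hwc : (walkCount R (2*m) : ℝ)
      = ∑ u, (fwalk R (2*m) (Sum.inl u) : ℝ) + ∑ v, (fwalk R (2*m) (Sum.inr v) : ℝ) := by
    rw [walkCount_eq_sum_fwalk]
    push_cast
    rw [Fintype.sum_sum_type]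
  rcases le_total HQ HP with hmin | hmin
  · rw [min_eq_right hmin]
    have hb := side_bound hisoL hisoR hU m
    rw [← hHP, ← hHQ] at hb
    rw [hwc]
    push_cast at hb ⊢
    have h2 : (0:ℝ) ≤ ∑ v, (fwalk R (2*m) (Sum.inr v) : ℝ) :=
      Finset.sum_nonneg fun v _ => hfnn _
    linarith [hb]
  · rw [min_eq_left hmin]
    have hb := side_bound (R := swapRel R) (fun v => hisoR v) (fun u => hisoL u) hV m
    simp only [degL_swap, degR_swap, edgeCount_swap, (fwalk_swap R (2*m)).1] at hb
    rw [← hHP, ← hHQ] at hb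
    rw [hwc]
    push_cast at hb ⊢
    have h2 : (0:ℝ) ≤ ∑ u, (fwalk R (2*m) (Sum.inl u) : ℝ) :=
      Finset.sum_nonneg fun u _ => hfnn _
    have hcomm : HQ + HP = HP + HQ := by ring
    rw [hcomm] at hb
    linarith [hb]
end

section
/- Let G be a finite bipartite graph with left vertex set U of size m ≥ 1 and right vertex set V of size n ≥ 1, with no isolated vertices, and let k be an even positive integer. Then the number |𝒫_k| of walks of length k in G (where edges may be repeated) satisfies |𝒫_k| ≥ |E(G)|^k / ( (mn)^{(k/2)-1} · min{m, n} ). -/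
open Matrix Finset SimpleGraph

section AuxFW
variable {W : Type*} [Fintype W] [DecidableEq W] (G : SimpleGraph W) [DecidableRel G.Adj]

/-- Sum of all entries of the `j`-th power of the adjacency matrix (over `ℝ`). -/
noncomputable def fW (j : ℕ) : ℝ := ∑ x, ∑ y, (G.adjMatrix ℝ ^ j) x y

lemma fW_eq_dot (j : ℕ) : fW G j = (1 : W → ℝ) ⬝ᵥ ((G.adjMatrix ℝ ^ j) *ᵥ 1) := by
  simp [fW, dotProduct, Matrix.mulVec]

lemma fW_add (a b : ℕ) :
    fW G (a + b) = ((G.adjMatrix ℝ ^ a) *ᵥ (1 : W → ℝ)) ⬝ᵥ ((G.adjMatrix ℝ ^ b) *ᵥ 1) := by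
  calc fW G (a + b) = (1 : W → ℝ) ⬝ᵥ ((G.adjMatrix ℝ ^ a) *ᵥ ((G.adjMatrix ℝ ^ b) *ᵥ 1)) := by
        rw [fW_eq_dot, Matrix.mulVec_mulVec, ← pow_add]
    _ = ((1 : W → ℝ) ᵥ* (G.adjMatrix ℝ ^ a)) ⬝ᵥ ((G.adjMatrix ℝ ^ b) *ᵥ 1) :=
        Matrix.dotProduct_mulVec _ _ _
    _ = _ := by rw [← Matrix.mulVec_transpose, Matrix.transpose_pow, transpose_adjMatrix]

lemma fW_sq_le (a b : ℕ) : fW G (a + b) ^ 2 ≤ fW G (a + a) * fW G (b + b) := by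
  rw [fW_add G a b, fW_add G a a, fW_add G b b]
  have h := Finset.sum_mul_sq_le_sq_mul_sq Finset.univ
    ((G.adjMatrix ℝ ^ a) *ᵥ (1 : W → ℝ)) ((G.adjMatrix ℝ ^ b) *ᵥ 1)
  simpa [dotProduct, sq] using h

lemma walkCount_fW {U V : Type*} [Fintype U] [Fintype V] [DecidableEq U] [DecidableEq V]
    (R : U → V → Prop) [DecidableRel (bipGraph R).Adj] (k : ℕ) :
    (walkCount R k : ℝ) = fW (bipGraph R) k := by
  rw [walkCount, fW]
  push_cast
  refine Finset.sum_congr rfl fun x _ => Finset.sum_congr rfl fun y _ => ?_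
  rw [adjMatrix_pow_apply_eq_card_walk, Nat.card_eq_fintype_card]
  norm_cast

end AuxFW

/-- The log-convexity chain: if `F (j+1)² ≤ F j · F (j+2)` for all `j` and `F 0, F 1 > 0`,
then `F 1 ^ (l+1) ≤ F (l+1) · F 0 ^ l`. -/
lemma chain_pow_le (F : ℕ → ℝ) (h0 : 0 < F 0) (h1 : 0 < F 1)
    (hcs : ∀ j, F (j + 1) ^ 2 ≤ F j * F (j + 2)) :
    ∀ l, F 1 ^ (l + 1) ≤ F (l + 1) * F 0 ^ l := by
  have hpos : ∀ j, 0 < F j ∧ 0 < F (j + 1) := by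
    intro j
    induction j with
    | zero => exact ⟨h0, h1⟩
    | succ n ih =>
      refine ⟨ih.2, ?_⟩
      have h := hcs n
      nlinarith [ih.1, ih.2, sq_nonneg (F (n + 1))]
  have hstep : ∀ j, F j * F 1 ≤ F (j + 1) * F 0 := by
    intro j
    induction j with
    | zero => linarith [mul_comm (F 0) (F 1)]
    | succ n ih =>
      have h := hcs n
      have p1 := (hpos n).1
      have p2 := (hpos n).2
      have p3 := (hpos (n + 1)).2
      have key : F (n + 1) ^ 2 * F 1 ≤ F (n + 1) * (F (n + 2) * F 0) := by
        calc F (n + 1) ^ 2 * F 1 ≤ (F n * F (n + 2)) * F 1 := by nlinarith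
          _ = (F n * F 1) * F (n + 2) := by ring
          _ ≤ (F (n + 1) * F 0) * F (n + 2) := by nlinarith
          _ = F (n + 1) * (F (n + 2) * F 0) := by ring
      have := le_of_mul_le_mul_left
        (by nlinarith [key] : F (n + 1) * (F (n + 1) * F 1) ≤ F (n + 1) * (F (n + 2) * F 0)) p2
      linarith
  intro l
  induction l with
  | zero => simpa using le_refl (F 1)
  | succ n ih =>
    calc F 1 ^ (n + 2) = F 1 ^ (n + 1) * F 1 := by ring
      _ ≤ (F (n + 1) * F 0 ^ n) * F 1 := by
          have := pow_pos h1 (n + 1)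
          nlinarith [pow_pos h0 n, (hpos (n + 1)).1]
      _ = (F (n + 1) * F 1) * F 0 ^ n := by ring
      _ ≤ (F (n + 2) * F 0) * F 0 ^ n := by
          have := pow_pos h0 n
          nlinarith [hstep (n + 1)]
      _ = F (n + 2) * F 0 ^ (n + 1) := by ring

section AuxBip
variable {U V : Type*} [Fintype U] [Fintype V] (R : U → V → Prop) [∀ u v, Decidable (R u v)]

instance bipGraph.instDecidableRel : DecidableRel (bipGraph R).Adj := fun x y =>
  match x, y with
  | Sum.inl _, Sum.inl _ => Decidable.isFalse id
  | Sum.inl u, Sum.inr v => ‹∀ u v, Decidable (R u v)› u v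
  | Sum.inr v, Sum.inl u => ‹∀ u v, Decidable (R u v)› u v
  | Sum.inr _, Sum.inr _ => Decidable.isFalse id

lemma bip_mulVec_inl (u : U) :
    ((bipGraph R).adjMatrix ℝ *ᵥ (1 : U ⊕ V → ℝ)) (Sum.inl u) = (degL R u : ℝ) := by
  rw [degL, Finset.card_filter]
  simp only [Matrix.mulVec, dotProduct, Fintype.sum_sum_type, adjMatrix_apply,
    Pi.one_apply, mul_one]
  have h1 : ∀ u' : U, (if (bipGraph R).Adj (Sum.inl u) (Sum.inl u') then (1 : ℝ) else 0) = 0 := by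
    intro u'; simp [bipGraph]
  have h2 : ∀ v : V, (if (bipGraph R).Adj (Sum.inl u) (Sum.inr v) then (1 : ℝ) else 0)
      = if R u v then 1 else 0 := by
    intro v; simp [bipGraph]
  push_cast
  simp [h1, h2]

lemma bip_mulVec_inr (v : V) :
    ((bipGraph R).adjMatrix ℝ *ᵥ (1 : U ⊕ V → ℝ)) (Sum.inr v) = (degR R v : ℝ) := by
  rw [degR, Finset.card_filter]
  simp only [Matrix.mulVec, dotProduct, Fintype.sum_sum_type, adjMatrix_apply,
    Pi.one_apply, mul_one]
  have h1 : ∀ v' : V, (if (bipGraph R).Adj (Sum.inr v) (Sum.inr v') then (1 : ℝ) else 0) = 0 := by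
    intro v'; simp [bipGraph]
  have h2 : ∀ u : U, (if (bipGraph R).Adj (Sum.inr v) (Sum.inl u) then (1 : ℝ) else 0)
      = if R u v then 1 else 0 := by
    intro u; simp [bipGraph]
  push_cast
  simp [h1, h2]

lemma sum_degL : ∑ u, degL R u = edgeCount R := by
  rw [edgeCount, Finset.card_filter, Fintype.sum_prod_type]
  exact Finset.sum_congr rfl fun u _ => by rw [degL, Finset.card_filter]

lemma sum_degR : ∑ v, degR R v = edgeCount R := by
  rw [edgeCount, Finset.card_filter, Fintype.sum_prod_type_right]
  exact Finset.sum_congr rfl fun v _ => by rw [degR, Finset.card_filter]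

end AuxBip

set_option maxHeartbeats 1000000 in
/-- Lower bound on the number of walks of even length `k` in a finite bipartite graph
with sides of sizes `m, n ≥ 1` and no isolated vertices:
`|𝒫_k| ≥ |E(G)|^k / ((m·n)^(k/2 - 1) · min{m, n})`. -/
theorem walks_cardinality_lower_bound_even {U V : Type*} [Fintype U] [Fintype V]
    (R : U → V → Prop) [∀ u v, Decidable (R u v)]
    (hU : 0 < Fintype.card U) (hV : 0 < Fintype.card V)
    (hisoL : ∀ u : U, ∃ v : V, R u v) (hisoR : ∀ v : V, ∃ u : U, R u v)
    (k : ℕ) (hk0 : 0 < k) (hk : Even k) :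
    (edgeCount R : ℝ) ^ k /
        (((Fintype.card U * Fintype.card V : ℕ) : ℝ) ^ (k / 2 - 1) *
          ((min (Fintype.card U) (Fintype.card V) : ℕ) : ℝ))
      ≤ (walkCount R k : ℝ) := by
  classical
  obtain ⟨l, rfl⟩ : ∃ l, k = l + l := by obtain ⟨l, hl⟩ := hk; exact ⟨l, hl⟩
  obtain ⟨t, rfl⟩ : ∃ t, l = t + 1 := ⟨l - 1, by omega⟩
  have hexp : (t + 1 + (t + 1)) / 2 - 1 = t := by omega
  rw [hexp]
  set m := Fintype.card U with hm
  set n := Fintype.card V with hn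
  set E := edgeCount R with hE
  set G := bipGraph R with hG
  set F : ℕ → ℝ := fun j => fW G (j + j) with hFdef
  -- real positivity of the sizes
  have hmpos : (0 : ℝ) < m := by exact_mod_cast hU
  have hnpos : (0 : ℝ) < n := by exact_mod_cast hV
  -- the walk count is F (t+1)
  have hwc : (walkCount R (t + 1 + (t + 1)) : ℝ) = F (t + 1) := walkCount_fW R _
  -- Cauchy–Schwarz chain hypothesis
  have hcs : ∀ j, F (j + 1) ^ 2 ≤ F j * F (j + 2) := by
    intro j
    have h := fW_sq_le G j (j + 2)
    have he : j + (j + 2) = (j + 1) + (j + 1) := by omega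
    rw [he] at h
    exact h
  -- value of F 0
  have hF0 : F 0 = (m : ℝ) + n := by
    show fW G (0 + 0) = _
    simp [fW, Matrix.one_apply]; rfl
  -- value of F 1
  have hF1 : F 1 = (∑ u, (degL R u : ℝ) * degL R u) + ∑ v, (degR R v : ℝ) * degR R v := by
    show fW G (1 + 1) = _
    rw [fW_add]
    simp only [pow_one, dotProduct]
    rw [Fintype.sum_sum_type]
    congr 1
    · exact Finset.sum_congr rfl fun u _ => by rw [bip_mulVec_inl]
    · exact Finset.sum_congr rfl fun v _ => by rw [bip_mulVec_inr]
  -- positivity of E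
  have hEpos : (0 : ℝ) < E := by
    have : 0 < E := by
      obtain ⟨u⟩ := Fintype.card_pos_iff.mp hU
      obtain ⟨v, hv⟩ := hisoL u
      exact Finset.card_pos.mpr ⟨(u, v), by simp [edgeCount, hv]⟩
    exact_mod_cast this
  -- Cauchy–Schwarz for the degrees
  have hCSL : (E : ℝ) ^ 2 ≤ m * ∑ u, (degL R u : ℝ) * degL R u := by
    have h := sq_sum_le_card_mul_sum_sq (s := (Finset.univ : Finset U))
      (f := fun u => (degL R u : ℝ))
    have h1 : ∑ u, (degL R u : ℝ) = E := by
      rw [hE, ← sum_degL R]; push_cast; rfl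
    simpa [h1, sq, Finset.card_univ, hm] using h
  have hCSR : (E : ℝ) ^ 2 ≤ n * ∑ v, (degR R v : ℝ) * degR R v := by
    have h := sq_sum_le_card_mul_sum_sq (s := (Finset.univ : Finset V))
      (f := fun v => (degR R v : ℝ))
    have h1 : ∑ v, (degR R v : ℝ) = E := by
      rw [hE, ← sum_degR R]; push_cast; rfl
    simpa [h1, sq, Finset.card_univ, hn] using h
  -- the key lower bound for F 1
  have hF1mn : (E : ℝ) ^ 2 * ((m : ℝ) + n) ≤ F 1 * ((m : ℝ) * n) := by
    rw [hF1]
    nlinarith [mul_le_mul_of_nonneg_left hCSL hnpos.le,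
      mul_le_mul_of_nonneg_left hCSR hmpos.le]
  have hF0pos : 0 < F 0 := by rw [hF0]; positivity
  have hF1pos : 0 < F 1 := by
    have h1 : (0 : ℝ) < F 1 * ((m : ℝ) * n) :=
      lt_of_lt_of_le (by positivity) hF1mn
    nlinarith [mul_pos hmpos hnpos]
  have chain := chain_pow_le F hF0pos hF1pos hcs t
  rw [hF0] at chain
  -- finish with algebra
  rw [hwc]
  have hminpos : (0 : ℝ) < min (m : ℝ) n := lt_min hmpos hnpos
  have hden : (0 : ℝ) < ((m : ℝ) * n) ^ t * min (m : ℝ) n := by positivity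
  have hcast : ((m * n : ℕ) : ℝ) = (m : ℝ) * n := by push_cast; rfl
  have hcastmin : ((min m n : ℕ) : ℝ) = min (m : ℝ) n := by push_cast; rfl
  rw [hcast, hcastmin, div_le_iff₀ hden]
  have hSpos : (0 : ℝ) < (m : ℝ) + n := by positivity
  have hFt1pos : 0 < F (t + 1) := by
    have h1 := lt_of_lt_of_le (pow_pos hF1pos (t + 1)) chain
    nlinarith [pow_pos hSpos t]
  have hmn_le : (m : ℝ) * n ≤ ((m : ℝ) + n) * min (m : ℝ) n := by
    rcases le_total (m : ℝ) n with h | h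
    · rw [min_eq_left h]; nlinarith
    · rw [min_eq_right h]; nlinarith
  set S : ℝ := (m : ℝ) + n with hSdef
  set P : ℝ := (m : ℝ) * n with hPdef
  set Q : ℝ := min (m : ℝ) n with hQdef
  have hPpos : (0 : ℝ) < P := mul_pos hmpos hnpos
  clear_value S P Q
  have key : (E : ℝ) ^ (t + 1 + (t + 1)) * S ^ (t + 1)
      ≤ (F (t + 1) * (P ^ t * Q)) * S ^ (t + 1) := by
    calc (E : ℝ) ^ (t + 1 + (t + 1)) * S ^ (t + 1)
        = ((E : ℝ) ^ 2 * S) ^ (t + 1) := by ring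
      _ ≤ (F 1 * P) ^ (t + 1) := by
          apply pow_le_pow_left₀ (mul_nonneg (by positivity) hSpos.le) hF1mn
      _ = F 1 ^ (t + 1) * P ^ (t + 1) := by ring
      _ ≤ (F (t + 1) * S ^ t) * P ^ (t + 1) := by
          apply mul_le_mul_of_nonneg_right chain (pow_pos hPpos _).le
      _ = (F (t + 1) * S ^ t) * (P ^ t * P) := by ring
      _ ≤ (F (t + 1) * S ^ t) * (P ^ t * (S * Q)) := by
          apply mul_le_mul_of_nonneg_left _ (mul_nonneg hFt1pos.le (pow_pos hSpos t).le)
          apply mul_le_mul_of_nonneg_left hmn_le (pow_pos hPpos t).le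
      _ = (F (t + 1) * (P ^ t * Q)) * S ^ (t + 1) := by ring
  exact le_of_mul_le_mul_right key (pow_pos hSpos (t + 1))
end
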